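/- arXiv:1207.7330 — 7 statements merged into one kernel-verified Lean document; each statement's English description precedes it below -/
import Mathlib

section
/- Let μ, σ > 0, γ > 0 with γ ≠ 1, and 0 ≤ λ < μ. Set a = sqrt(|(γ−1)(μ²−λ²)/(γσ⁴) − (1/2 − μ/σ²)²|) and b = 1/2 − μ/σ² + (γ−1)(μ−λ)/(γσ²). Assume (γ−1)(μ²−λ²)/(γσ⁴) − (1/2 − μ/σ²)² < 0 and |b| < a. Then the function w(y) = (a·tanh(artanh(b/a) − a·y) + (μ/σ² − 1/2))/(γ−1) is differentiable on all of ℝ, satisfies the Riccati ODE with parameters (μ, σ, γ, λ) at every y ∈ ℝ, and satisfies w(0) = (μ−λ)/(γσ²). -/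
noncomputable def artanh (x : ℝ) : ℝ := (1 / 2) * Real.log ((1 + x) / (1 - x))

lemma hasDerivAt_tanh (x : ℝ) : HasDerivAt Real.tanh (1 - Real.tanh x ^ 2) x := by
  have hc : Real.cosh x ≠ 0 := (Real.cosh_pos x).ne'
  have h := (Real.hasDerivAt_sinh x).div (Real.hasDerivAt_cosh x) hc
  have heq : (Real.cosh x * Real.cosh x - Real.sinh x * Real.sinh x) / Real.cosh x ^ 2
      = 1 - Real.tanh x ^ 2 := by
    have h1 := Real.cosh_sq_sub_sinh_sq x
    rw [Real.tanh_eq_sinh_div_cosh]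
    field_simp
  have hfun : Real.tanh = fun x => Real.sinh x / Real.cosh x := by
    funext y; exact Real.tanh_eq_sinh_div_cosh y
  have h' : HasDerivAt Real.tanh
      ((Real.cosh x * Real.cosh x - Real.sinh x * Real.sinh x) / Real.cosh x ^ 2) x := by
    rw [hfun]; exact h
  rwa [heq] at h'

lemma tanh_artanh {x : ℝ} (hx : |x| < 1) : Real.tanh (artanh x) = x := by
  have h1 : -1 < x := neg_lt_of_abs_lt hx
  have h2 : x < 1 := lt_of_abs_lt hx
  have ht : (0:ℝ) < (1 + x) / (1 - x) := div_pos (by linarith) (by linarith)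
  have he2 : Real.exp (2 * artanh x) = (1 + x) / (1 - x) := by
    rw [artanh, show 2 * ((1:ℝ)/2 * Real.log ((1+x)/(1-x))) = Real.log ((1+x)/(1-x)) by ring]
    exact Real.exp_log ht
  have hep : (0:ℝ) < Real.exp (artanh x) := Real.exp_pos _
  have hsq : Real.exp (artanh x) * Real.exp (artanh x) = (1 + x) / (1 - x) := by
    rw [← Real.exp_add, ← he2]; ring_nf
  rw [Real.tanh_eq_sinh_div_cosh, Real.sinh_eq, Real.cosh_eq, Real.exp_neg]
  set E := Real.exp (artanh x) with hE
  have hEne : E ≠ 0 := ne_of_gt hep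
  have hx1 : (1:ℝ) - x ≠ 0 := by linarith
  have hsq' : E * E * (1 - x) = 1 + x := by
    field_simp at hsq; linarith [hsq]
  rw [div_div_div_cancel_right₀]
  · rw [div_eq_iff (by positivity)]
    field_simp
    nlinarith [hsq', hep]
  · norm_num

/-- the hyperbolic-tangent case of the explicit solution of the
Riccati ODE `w' + (1−γ)w² + (2μ/σ² − 1)w − (μ² − λ²)/(γσ⁴) = 0`
with initial value `w(0) = (μ−λ)/(γσ²)`. -/
theorem riccati_tanh_solution (μ σ γ lam : ℝ)
    (hμ : 0 < μ) (hσ : 0 < σ) (hγ : 0 < γ) (hγ1 : γ ≠ 1)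
    (hlam0 : 0 ≤ lam) (hlamμ : lam < μ)
    (a b : ℝ)
    (ha : a = Real.sqrt |(γ - 1) * (μ ^ 2 - lam ^ 2) / (γ * σ ^ 4) - (1 / 2 - μ / σ ^ 2) ^ 2|)
    (hb : b = 1 / 2 - μ / σ ^ 2 + (γ - 1) * (μ - lam) / (γ * σ ^ 2))
    (hD : (γ - 1) * (μ ^ 2 - lam ^ 2) / (γ * σ ^ 4) - (1 / 2 - μ / σ ^ 2) ^ 2 < 0)
    (hba : |b| < a)
    (w : ℝ → ℝ)
    (hw : w = fun y => (a * Real.tanh (artanh (b / a) - a * y) + (μ / σ ^ 2 - 1 / 2)) / (γ - 1)) :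
    Differentiable ℝ w ∧
    (∀ y : ℝ, deriv w y + (1 - γ) * (w y) ^ 2 + (2 * μ / σ ^ 2 - 1) * (w y)
        - (μ ^ 2 - lam ^ 2) / (γ * σ ^ 4) = 0) ∧
    w 0 = (μ - lam) / (γ * σ ^ 2) := by
  have hσ2 : σ ^ 2 ≠ 0 := by positivity
  have hγ0 : γ ≠ 0 := ne_of_gt hγ
  have hγ1' : γ - 1 ≠ 0 := sub_ne_zero.mpr hγ1
  have ha0 : 0 < a := lt_of_le_of_lt (abs_nonneg b) hba
  have hba1 : |b / a| < 1 := by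
    rw [abs_div, abs_of_pos ha0, div_lt_one ha0]; exact hba
  have ha2 : a ^ 2 = (1 / 2 - μ / σ ^ 2) ^ 2
      - (γ - 1) * (μ ^ 2 - lam ^ 2) / (γ * σ ^ 4) := by
    rw [ha, Real.sq_sqrt (abs_nonneg _), abs_of_neg hD]; ring
  have hda : ∀ y : ℝ, HasDerivAt w
      (a * ((1 - Real.tanh (artanh (b / a) - a * y) ^ 2) * (-a)) / (γ - 1)) y := by
    intro y
    have hinner : HasDerivAt (fun y : ℝ => artanh (b / a) - a * y) (-a) y := by
      simpa using ((hasDerivAt_id y).const_mul a).const_sub (artanh (b / a))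
    have hcomp := (hasDerivAt_tanh (artanh (b / a) - a * y)).comp y hinner
    rw [hw]
    exact ((hcomp.const_mul a).add_const (μ / σ ^ 2 - 1 / 2)).div_const (γ - 1)
  refine ⟨fun y => (hda y).differentiableAt, fun y => ?_, ?_⟩
  · rw [(hda y).deriv, hw]
    simp only
    set T := Real.tanh (artanh (b / a) - a * y) with hT
    have ha2' : a ^ 2 * (4 * σ ^ 4) * (γ * σ ^ 4) = (σ ^ 2 - 2 * μ) ^ 2 * (γ * σ ^ 4) - 4 * σ ^ 4 * ((γ - 1) * (μ ^ 2 - lam ^ 2)) := by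
      rw [ha2]; field_simp; ring
    field_simp
    have h3 : γ * (μ * 2 - σ ^ 2) ^ 2 - 4 * γ * a ^ 2 * σ ^ 4 = 4 * (γ - 1) * (μ ^ 2 - lam ^ 2) := by
      rw [ha2]; field_simp; ring
    linear_combination (γ - 1) * h3
  · rw [hw]
    simp only [mul_zero, sub_zero]
    rw [tanh_artanh hba1, mul_div_cancel₀ _ (ne_of_gt ha0), hb]
    field_simp
    ring
end

section
/- Let μ, σ > 0, γ > 0 with γ ≠ 1, and 0 ≤ λ < μ. Set D = (γ−1)(μ²−λ²)/(γσ⁴) − (1/2 − μ/σ²)², and b = 1/2 − μ/σ² + (γ−1)(μ−λ)/(γσ²). Assume D > 0 and set a = sqrt(D). Then the function w(y) = (a·tan(arctan(b/a) + a·y) + (μ/σ² − 1/2))/(γ−1) is differentiable and satisfies the Riccati ODE with parameters (μ, σ, γ, λ) at every y with arctan(b/a) + a·y ∈ (−π/2, π/2), and satisfies w(0) = (μ−λ)/(γσ²). -/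
/-- the tangent case of the explicit solution of the
Riccati ODE `w' + (1−γ)w² + (2μ/σ² − 1)w − (μ² − λ²)/(γσ⁴) = 0`
with initial value `w(0) = (μ−λ)/(γσ²)`. -/
theorem riccati_tan_solution (μ σ γ lam : ℝ)
    (hμ : 0 < μ) (hσ : 0 < σ) (hγ : 0 < γ) (hγ1 : γ ≠ 1)
    (hlam0 : 0 ≤ lam) (hlamμ : lam < μ)
    (D a b : ℝ)
    (hD : D = (γ - 1) * (μ ^ 2 - lam ^ 2) / (γ * σ ^ 4) - (1 / 2 - μ / σ ^ 2) ^ 2)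
    (hb : b = 1 / 2 - μ / σ ^ 2 + (γ - 1) * (μ - lam) / (γ * σ ^ 2))
    (hDpos : 0 < D)
    (ha : a = Real.sqrt D)
    (w : ℝ → ℝ)
    (hw : w = fun y => (a * Real.tan (Real.arctan (b / a) + a * y) + (μ / σ ^ 2 - 1 / 2)) / (γ - 1)) :
    (∀ y : ℝ, Real.arctan (b / a) + a * y ∈ Set.Ioo (-(Real.pi / 2)) (Real.pi / 2) →
      DifferentiableAt ℝ w y ∧
      deriv w y + (1 - γ) * (w y) ^ 2 + (2 * μ / σ ^ 2 - 1) * (w y)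
        - (μ ^ 2 - lam ^ 2) / (γ * σ ^ 4) = 0) ∧
    w 0 = (μ - lam) / (γ * σ ^ 2) := by
  have hγ1' : γ - 1 ≠ 0 := sub_ne_zero.mpr hγ1
  have hapos : 0 < a := ha ▸ Real.sqrt_pos.mpr hDpos
  have ha2 : a ^ 2 = D := by rw [ha, Real.sq_sqrt hDpos.le]
  have hσ2 : (σ : ℝ) ^ 2 ≠ 0 := pow_ne_zero 2 hσ.ne'
  have hγ0 : γ ≠ 0 := hγ.ne'
  have key : a ^ 2 + (μ / σ ^ 2 - 1 / 2) ^ 2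
      = (γ - 1) * ((μ ^ 2 - lam ^ 2) / (γ * σ ^ 4)) := by
    rw [ha2, hD]; ring
  constructor
  · intro y hy
    set θ := Real.arctan (b / a) + a * y with hθ
    have hcos : Real.cos θ ≠ 0 := (Real.cos_pos_of_mem_Ioo hy).ne'
    have h1 : HasDerivAt (fun y : ℝ => Real.arctan (b / a) + a * y) a y := by
      simpa using ((hasDerivAt_id y).const_mul a).const_add (Real.arctan (b / a))
    have htan : HasDerivAt (fun y : ℝ => Real.tan (Real.arctan (b / a) + a * y))
        ((1 / Real.cos θ ^ 2) * a) y := by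
        have := (Real.hasDerivAt_tan hcos).comp y h1; exact this
    have hw' : HasDerivAt w ((a * ((1 / Real.cos θ ^ 2) * a)) / (γ - 1)) y := by
      rw [hw]
      exact ((htan.const_mul a).add_const (μ / σ ^ 2 - 1 / 2)).div_const (γ - 1)
    refine ⟨hw'.differentiableAt, ?_⟩
    rw [hw'.deriv, hw]
    simp only
    rw [show (1 / Real.cos θ ^ 2) = 1 + Real.tan θ ^ 2 by
      rw [one_div, ← Real.inv_one_add_tan_sq hcos, inv_inv]]
    rw [show 2 * μ / σ ^ 2 - 1 = 2 * (μ / σ ^ 2 - 1 / 2) by ring]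
    set t := Real.tan θ
    generalize μ / σ ^ 2 - 1 / 2 = c at key ⊢
    generalize (μ ^ 2 - lam ^ 2) / (γ * σ ^ 4) = K at key ⊢
    field_simp
    linear_combination (γ - 1) * key
  · rw [hw]
    simp only [mul_zero, add_zero, Real.tan_arctan]
    rw [mul_div_cancel₀ _ hapos.ne']
    rw [hb]
    field_simp
    ring
end

section
/- Let μ, σ > 0, γ > 0 with γ ≠ 1, 0 < λ < μ, ε ∈ (0,1), and assume μ/(γσ²) ∈ (0,1). Set p = (μ−λ)/(γσ²), q = (μ+λ)/(γσ²), assume 0 < p < μ/(γσ²) < q < 1, and set l = p/(1−p), u = (1/(1−ε))·q/(1−q), L = log(u/l), and assume L > 0. Let w be twice continuously differentiable on [0, L], satisfy the Riccati ODE with parameters (μ, σ, γ, λ) on [0, L], satisfy w(0) = p and w(L) = q, and be nondecreasing with values in [p, q]. Define g(y) = w(y)/(l·e^{y}·(1 − w(y))). Then g'(y) ≤ 0 for all y ∈ [0, L], and consequently 1 − ε ≤ g(y) ≤ 1 for all y ∈ [0, L]. -/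
/-- the multiplicative deviation `g(y) = w(y)/(l·e^y·(1 − w(y)))`
of the candidate shadow price from the ask price is nonincreasing on `[0, L]`,
and hence the shadow price stays within the bid-ask spread `[(1−ε)S, S]`. -/
theorem shadow_price_in_spread (μ σ γ lam ε : ℝ)
    (hμ : 0 < μ) (hσ : 0 < σ) (hγ : 0 < γ) (hγ1 : γ ≠ 1)
    (hlam0 : 0 < lam) (hlamμ : lam < μ)
    (hε : ε ∈ Set.Ioo (0 : ℝ) 1)
    (hmerton : μ / (γ * σ ^ 2) ∈ Set.Ioo (0 : ℝ) 1)
    (p q : ℝ)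
    (hp : p = (μ - lam) / (γ * σ ^ 2)) (hq : q = (μ + lam) / (γ * σ ^ 2))
    (hp0 : 0 < p) (hpm : p < μ / (γ * σ ^ 2)) (hmq : μ / (γ * σ ^ 2) < q) (hq1 : q < 1)
    (l u L : ℝ)
    (hl : l = p / (1 - p)) (hu : u = (1 / (1 - ε)) * (q / (1 - q)))
    (hL : L = Real.log (u / l)) (hLpos : 0 < L)
    (w w' w'' : ℝ → ℝ)
    (hderiv : ∀ y ∈ Set.Icc (0 : ℝ) L, HasDerivWithinAt w (w' y) (Set.Icc (0 : ℝ) L) y)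
    (hderiv2 : ∀ y ∈ Set.Icc (0 : ℝ) L, HasDerivWithinAt w' (w'' y) (Set.Icc (0 : ℝ) L) y)
    (hcont2 : ContinuousOn w'' (Set.Icc (0 : ℝ) L))
    (hode : ∀ y ∈ Set.Icc (0 : ℝ) L,
      w' y + (1 - γ) * (w y) ^ 2 + (2 * μ / σ ^ 2 - 1) * (w y)
        - (μ ^ 2 - lam ^ 2) / (γ * σ ^ 4) = 0)
    (hw0 : w 0 = p) (hwL : w L = q)
    (hmono : MonotoneOn w (Set.Icc (0 : ℝ) L))
    (hrange : ∀ y ∈ Set.Icc (0 : ℝ) L, w y ∈ Set.Icc p q)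
    (g : ℝ → ℝ)
    (hg : g = fun y => w y / (l * Real.exp y * (1 - w y))) :
    (∀ y ∈ Set.Icc (0 : ℝ) L, derivWithin g (Set.Icc (0 : ℝ) L) y ≤ 0) ∧
    (∀ y ∈ Set.Icc (0 : ℝ) L, 1 - ε ≤ g y ∧ g y ≤ 1) := by
  obtain ⟨hε0, hε1⟩ := hε
  have hσ2 : (0:ℝ) < σ ^ 2 := by positivity
  have hγσ : (0:ℝ) < γ * σ ^ 2 := by positivity
  have hpq : p < q := lt_trans hpm hmq
  have hq0 : 0 < q := lt_trans hp0 hpq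
  have hp1 : p < 1 := lt_trans hpq hq1
  have h1p : 0 < 1 - p := by linarith
  have h1q : 0 < 1 - q := by linarith
  have h1ε : 0 < 1 - ε := by linarith
  have hl0 : 0 < l := by rw [hl]; exact div_pos hp0 h1p
  have hu0 : 0 < u := by
    rw [hu]; exact mul_pos (by positivity) (div_pos hq0 h1q)
  have heL : Real.exp L = u / l := by rw [hL, Real.exp_log (div_pos hu0 hl0)]
  set s : Set ℝ := Set.Icc (0 : ℝ) L with hs
  -- coefficient identities
  have h1 : 2 * μ / σ ^ 2 - 1 = γ * (p + q) - 1 := by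
    rw [hp, hq]; field_simp; ring
  have h2 : (μ ^ 2 - lam ^ 2) / (γ * σ ^ 4) = γ * (p * q) := by
    rw [hp, hq]; field_simp; ring
  -- key inequality: w' ≤ w(1-w)
  have key : ∀ y ∈ s, w' y ≤ w y * (1 - w y) := by
    intro y hy
    have hodey := hode y hy
    have hmem := hrange y hy
    have heq : w' y = w y * (1 - w y) + γ * ((w y - p) * (w y - q)) := by
      linear_combination hodey - (w y) * h1 + h2
    have h3 : (w y - p) * (w y - q) ≤ 0 :=
      mul_nonpos_iff.2 (Or.inl ⟨by linarith [hmem.1], by linarith [hmem.2]⟩)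
    have h4 : γ * ((w y - p) * (w y - q)) ≤ 0 :=
      mul_nonpos_iff.2 (Or.inl ⟨hγ.le, h3⟩)
    linarith
  -- bounds on w
  have hwlt1 : ∀ y ∈ s, w y < 1 := fun y hy => lt_of_le_of_lt (hrange y hy).2 hq1
  have hDpos : ∀ y ∈ s, 0 < l * Real.exp y * (1 - w y) := by
    intro y hy
    have := hwlt1 y hy
    have : 0 < 1 - w y := by linarith
    positivity
  -- derivative of g
  set G : ℝ → ℝ := fun y =>
    (w' y * (l * Real.exp y * (1 - w y)) -
      w y * (l * Real.exp y * (1 - w y) + l * Real.exp y * (-(w' y)))) /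
      (l * Real.exp y * (1 - w y)) ^ 2 with hG
  have hgd : ∀ y ∈ s, HasDerivWithinAt g (G y) s y := by
    intro y hy
    have hdw := hderiv y hy
    have he : HasDerivWithinAt (fun y => l * Real.exp y) (l * Real.exp y) s y :=
      ((Real.hasDerivAt_exp y).const_mul l).hasDerivWithinAt
    have h1w : HasDerivWithinAt (fun y => 1 - w y) (-(w' y)) s y := by
      exact hdw.const_sub (1:ℝ)
    have hd : HasDerivWithinAt (fun y => l * Real.exp y * (1 - w y))
        (l * Real.exp y * (1 - w y) + l * Real.exp y * (-(w' y))) s y := he.mul h1w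
    have := hdw.div hd (ne_of_gt (hDpos y hy))
    rw [hg]
    exact this
  have hGle : ∀ y ∈ s, G y ≤ 0 := by
    intro y hy
    have hk := key y hy
    have hD := hDpos y hy
    rw [hG]
    apply div_nonpos_of_nonpos_of_nonneg _ (sq_nonneg _)
    have hle : 0 < l * Real.exp y := by positivity
    have hnum : w' y * (l * Real.exp y * (1 - w y)) -
        w y * (l * Real.exp y * (1 - w y) + l * Real.exp y * (-(w' y))) =
        (l * Real.exp y) * (w' y - w y * (1 - w y)) := by ring
    rw [hnum]
    exact mul_nonpos_iff.2 (Or.inl ⟨hle.le, by linarith [hk]⟩)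
  have hconv : Convex ℝ s := convex_Icc 0 L
  have hgcont : ContinuousOn g s := fun y hy => (hgd y hy).continuousWithinAt
  have hanti : AntitoneOn g s := by
    apply antitoneOn_of_hasDerivWithinAt_nonpos hconv hgcont
    · intro x hx
      exact (hgd x (interior_subset hx)).mono interior_subset
    · intro x hx
      exact hGle x (interior_subset hx)
  have hunique : UniqueDiffOn ℝ s := uniqueDiffOn_Icc hLpos
  constructor
  · intro y hy
    rw [(hgd y hy).derivWithin (hunique y hy)]
    exact hGle y hy
  · have h0mem : (0:ℝ) ∈ s := ⟨le_refl _, hLpos.le⟩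
    have hLmem : L ∈ s := ⟨hLpos.le, le_refl _⟩
    have hg0 : g 0 = 1 := by
      rw [hg]
      simp only [Real.exp_zero, hw0, hl]
      field_simp
    have hgL : g L = 1 - ε := by
      rw [hg]
      simp only [heL, hwL, hu, hl]
      field_simp
    intro y hy
    constructor
    · have := hanti hy hLmem hy.2
      rw [hgL] at this; linarith
    · have := hanti h0mem hy hy.1
      rw [hg0] at this; linarith
end

section
/- Let μ, σ > 0, γ > 0, 0 ≤ λ ≤ μ, and let w be twice differentiable on an open interval I and satisfy the Riccati ODE with parameters (μ, σ, γ, λ) on I. If y₀ ∈ I satisfies w(y₀) ≠ 1 and w'(y₀) = w(y₀)·(1 − w(y₀)), then the function w̃(y) = w(y) − w'(y)/(1 − w(y)) is differentiable at y₀ with w̃'(y₀) = 2γ·w(y₀)·(μ/(γσ²) − w(y₀)). -/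
/-- at a point where `w̃ = w − w'/(1 − w)` vanishes (i.e. where
`w' = w(1 − w)`), the derivative of `w̃` equals `2γ·w·(μ/(γσ²) − w)`, for `w`
a solution of the Riccati ODE `w' + (1−γ)w² + (2μ/σ² − 1)w − (μ² − λ²)/(γσ⁴) = 0`
on an open interval. -/
theorem wtilde_derivative_at_zero (μ σ γ lam c d y₀ : ℝ)
    (hμ : 0 < μ) (hσ : 0 < σ) (hγ : 0 < γ)
    (hlam0 : 0 ≤ lam) (hlamμ : lam ≤ μ)
    (w w' w'' : ℝ → ℝ)
    (hderiv : ∀ y ∈ Set.Ioo c d, HasDerivAt w (w' y) y)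
    (hderiv2 : ∀ y ∈ Set.Ioo c d, HasDerivAt w' (w'' y) y)
    (hode : ∀ y ∈ Set.Ioo c d,
      w' y + (1 - γ) * (w y) ^ 2 + (2 * μ / σ ^ 2 - 1) * (w y)
        - (μ ^ 2 - lam ^ 2) / (γ * σ ^ 4) = 0)
    (hy₀ : y₀ ∈ Set.Ioo c d)
    (hne : w y₀ ≠ 1)
    (hzero : w' y₀ = w y₀ * (1 - w y₀)) :
    HasDerivAt (fun y => w y - w' y / (1 - w y))
      (2 * γ * w y₀ * (μ / (γ * σ ^ 2) - w y₀)) y₀ := by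
  have hw := hderiv y₀ hy₀
  set D : ℝ := (-(1 - γ) * (2 * w y₀) - (2 * μ / σ ^ 2 - 1)) * w' y₀ with hD
  -- W is the RHS expression for w' from the ODE
  have hW : HasDerivAt (fun y => (μ ^ 2 - lam ^ 2) / (γ * σ ^ 4)
      - (1 - γ) * (w y) ^ 2 - (2 * μ / σ ^ 2 - 1) * (w y)) D y₀ := by
    have h1 : HasDerivAt (fun y => (w y) ^ 2) (2 * w y₀ * w' y₀) y₀ := by
      have := hw.mul hw
      convert this using 1
      · rfl
      · rfl
      · ext y; rw [Pi.mul_apply]; ring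
      · ring
    have := ((h1.const_mul ((1:ℝ) - γ)).const_sub ((μ ^ 2 - lam ^ 2) / (γ * σ ^ 4))).sub
      (hw.const_mul (2 * μ / σ ^ 2 - 1))
    convert this using 1
    · rfl
    · rfl
    · rfl
    ring
  have heq : w' =ᶠ[nhds y₀] (fun y => (μ ^ 2 - lam ^ 2) / (γ * σ ^ 4)
      - (1 - γ) * (w y) ^ 2 - (2 * μ / σ ^ 2 - 1) * (w y)) := by
    filter_upwards [isOpen_Ioo.mem_nhds hy₀] with y hy
    have := hode y hy
    linarith
  have hw' : HasDerivAt w' D y₀ := hW.congr_of_eventuallyEq heq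
  have hden : HasDerivAt (fun y => 1 - w y) (-(w' y₀)) y₀ := hw.const_sub 1
  have hne0 : 1 - w y₀ ≠ 0 := sub_ne_zero.mpr hne.symm
  have hdiv := hw'.div hden hne0
  have H := hw.sub hdiv
  convert H using 1
  · rfl
  · rfl
  · rfl
  rw [hD, hzero]
  have hσ0 : σ ≠ 0 := ne_of_gt hσ
  have hγ0 : γ ≠ 0 := ne_of_gt hγ
  field_simp
  ring
end

section
/- Let μ, σ > 0, γ > 0 with μ/(γσ²) ∈ (0,1), 0 < λ < μ, and L > 0. Set p = (μ−λ)/(γσ²), q = (μ+λ)/(γσ²), and assume 0 < p < μ/(γσ²) < q < 1. Suppose w is twice continuously differentiable on [0, L], satisfies the Riccati ODE with parameters (μ, σ, γ, λ) on [0, L], is strictly increasing with w(0) = p and w(L) = q, and w(y) < 1 for all y ∈ [0, L]. Then the function w̃(y) = w(y) − w'(y)/(1 − w(y)) satisfies w̃(y) ≥ 0 for all y ∈ [0, L], and w̃(0) = w̃(L) = 0. -/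
/-- in the no-leverage case `μ/(γσ²) ∈ (0,1)`, the function
`w̃ = w − w'/(1 − w)` is nonnegative on `[0, L]` and vanishes at both endpoints,
for `w` a strictly increasing solution of the Riccati ODE
`w' + (1−γ)w² + (2μ/σ² − 1)w − (μ² − λ²)/(γσ⁴) = 0` with the stated boundary
values. -/
theorem wtilde_nonneg (μ σ γ lam L : ℝ)
    (hμ : 0 < μ) (hσ : 0 < σ) (hγ : 0 < γ)
    (hmerton : μ / (γ * σ ^ 2) ∈ Set.Ioo (0 : ℝ) 1)
    (hlam0 : 0 < lam) (hlamμ : lam < μ) (hLpos : 0 < L)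
    (p q : ℝ)
    (hp : p = (μ - lam) / (γ * σ ^ 2)) (hq : q = (μ + lam) / (γ * σ ^ 2))
    (hp0 : 0 < p) (hpm : p < μ / (γ * σ ^ 2)) (hmq : μ / (γ * σ ^ 2) < q) (hq1 : q < 1)
    (w w' w'' : ℝ → ℝ)
    (hderiv : ∀ y ∈ Set.Icc (0 : ℝ) L, HasDerivWithinAt w (w' y) (Set.Icc (0 : ℝ) L) y)
    (hderiv2 : ∀ y ∈ Set.Icc (0 : ℝ) L, HasDerivWithinAt w' (w'' y) (Set.Icc (0 : ℝ) L) y)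
    (hcont2 : ContinuousOn w'' (Set.Icc (0 : ℝ) L))
    (hode : ∀ y ∈ Set.Icc (0 : ℝ) L,
      w' y + (1 - γ) * (w y) ^ 2 + (2 * μ / σ ^ 2 - 1) * (w y)
        - (μ ^ 2 - lam ^ 2) / (γ * σ ^ 4) = 0)
    (hmono : StrictMonoOn w (Set.Icc (0 : ℝ) L))
    (hw0 : w 0 = p) (hwL : w L = q)
    (hwlt : ∀ y ∈ Set.Icc (0 : ℝ) L, w y < 1) :
    (∀ y ∈ Set.Icc (0 : ℝ) L, 0 ≤ w y - w' y / (1 - w y)) ∧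
    w 0 - w' 0 / (1 - w 0) = 0 ∧ w L - w' L / (1 - w L) = 0 := by

  have hσ2 : σ ^ 2 ≠ 0 := by positivity
  have hγ0 : γ ≠ 0 := ne_of_gt hγ
  -- key rewriting of the ODE
  have key : ∀ y ∈ Set.Icc (0 : ℝ) L,
      w' y = w y * (1 - w y) + γ * (w y - p) * (w y - q) := by
    intro y hy
    have h := hode y hy
    have hB : 2 * μ / σ ^ 2 = γ * (p + q) := by rw [hp, hq]; field_simp; ring
    have hC : (μ ^ 2 - lam ^ 2) / (γ * σ ^ 4) = γ * (p * q) := by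
      rw [hp, hq]; field_simp; ring
    rw [hB, hC] at h
    linear_combination h
  have hbounds : ∀ y ∈ Set.Icc (0 : ℝ) L, p ≤ w y ∧ w y ≤ q := by
    intro y hy
    obtain ⟨hy0, hyL⟩ := hy
    constructor
    · rw [← hw0]
      exact hmono.monotoneOn (Set.left_mem_Icc.2 hLpos.le) ⟨hy0, hyL⟩ hy0
    · rw [← hwL]
      exact hmono.monotoneOn ⟨hy0, hyL⟩ (Set.right_mem_Icc.2 hLpos.le) hyL
  have main : ∀ y ∈ Set.Icc (0 : ℝ) L,
      w y - w' y / (1 - w y) = -(γ * (w y - p) * (w y - q)) / (1 - w y) := by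
    intro y hy
    have h1 : (1 : ℝ) - w y ≠ 0 := by
      have := hwlt y hy; linarith
    rw [key y hy]
    field_simp
    ring
  refine ⟨?_, ?_, ?_⟩
  · intro y hy
    rw [main y hy]
    have h1 : (0 : ℝ) < 1 - w y := by have := hwlt y hy; linarith
    obtain ⟨hl, hr⟩ := hbounds y hy
    apply div_nonneg _ h1.le
    have h2 : (w y - p) * (w y - q) ≤ 0 :=
      mul_nonpos_of_nonneg_of_nonpos (by linarith) (by linarith)
    have h3 : γ * ((w y - p) * (w y - q)) ≤ 0 :=
      mul_nonpos_of_nonneg_of_nonpos hγ.le h2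
    nlinarith [h3]
  · have h0 : (0 : ℝ) ∈ Set.Icc (0 : ℝ) L := Set.left_mem_Icc.2 hLpos.le
    rw [main 0 h0, hw0]
    simp
  · have hL : L ∈ Set.Icc (0 : ℝ) L := Set.right_mem_Icc.2 hLpos.le
    rw [main L hL, hwL]
    simp
end

section
/- Let μ, σ > 0, γ > 0 with γ ≠ 1 and 0 < μ/(γσ²) ≠ 1, and let λ(ε) for small ε > 0 be the unique small positive solution of the shadow boundary equation w(λ, log(u(λ,ε)/l(λ))) = (μ+λ)/(γσ²), which satisfies |λ(ε) − γσ²·((3/(4γ))·(μ/(γσ²))²·(1−μ/(γσ²))²)^{1/3}·ε^{1/3}| ≤ C₀·ε for some constant C₀. Define the equivalent excess safe rate β(ε) = (μ² − λ(ε)²)/(2γσ²). Then there exist ε₀ > 0 and C > 0 such that for all ε ∈ (0, ε₀): | β(ε) − μ²/(2γσ²) + (γσ²/2)·( (3/(4γ))·(μ/(γσ²))²·(1 − μ/(γσ²))² )^{2/3}·ε^{2/3} | ≤ C·ε^{4/3}. -/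
/-- Hyperbolic cotangent. -/
noncomputable def coth (x : ℝ) : ℝ := Real.cosh x / Real.sinh x

/-- Inverse hyperbolic cotangent, defined for `|x| > 1`. -/
noncomputable def arcoth (x : ℝ) : ℝ := (1 / 2) * Real.log ((x + 1) / (x - 1))

/-- The explicit solution `w(λ, ·)` of the Riccati ODE
`w' + (1−γ)w² + (2μ/σ² − 1)w − (μ² − λ²)/(γσ⁴) = 0` with
`w(λ, 0) = (μ−λ)/(γσ²)`. -/
noncomputable def riccatiSol (μ σ γ lam : ℝ) : ℝ → ℝ := fun y =>
  let D : ℝ := (γ - 1) * (μ ^ 2 - lam ^ 2) / (γ * σ ^ 4) - (1 / 2 - μ / σ ^ 2) ^ 2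
  let a : ℝ := Real.sqrt |D|
  let b : ℝ := 1 / 2 - μ / σ ^ 2 + (γ - 1) * (μ - lam) / (γ * σ ^ 2)
  if 0 < D then
    (a * Real.tan (Real.arctan (b / a) + a * y) + (μ / σ ^ 2 - 1 / 2)) / (γ - 1)
  else if |b| < a then
    (a * Real.tanh (artanh (b / a) - a * y) + (μ / σ ^ 2 - 1 / 2)) / (γ - 1)
  else
    (a * coth (arcoth (b / a) - a * y) + (μ / σ ^ 2 - 1 / 2)) / (γ - 1)

/-- Buy boundary of the no-trade region for the stock-cash ratio. -/
noncomputable def buyBoundary (μ σ γ lam : ℝ) : ℝ := (μ - lam) / (γ * σ ^ 2 - (μ - lam))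

/-- Sell boundary of the no-trade region for the stock-cash ratio. -/
noncomputable def sellBoundary (μ σ γ lam ε : ℝ) : ℝ :=
  (1 / (1 - ε)) * ((μ + lam) / (γ * σ ^ 2 - (μ + lam)))

lemma aux_cube (g s k1 e1 : ℝ) (hg : g ≠ 0) (hs : s ≠ 0) :
    g * s ^ 2 / 2 * k1 ^ 2 * e1 ^ 2 = (g * s ^ 2 * k1 * e1) ^ 2 / (2 * g * s ^ 2) := by
  field_simp

lemma aux_expr (g s x l m : ℝ) (hg : g ≠ 0) (hs : s ≠ 0) :
    (m - l ^ 2) / (2 * g * s ^ 2) - m / (2 * g * s ^ 2) + x ^ 2 / (2 * g * s ^ 2)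
      = (x - l) * (x + l) / (2 * g * s ^ 2) := by
  field_simp; ring

/-- second-order asymptotics of the equivalent excess safe rate
`β(ε) = (μ² − λ(ε)²)/(2γσ²)`, where `λ(ε)` is the unique small positive
solution of the shadow boundary equation, with first-order asymptotics
`λ(ε) = γσ²·((3/(4γ))·(μ/(γσ²))²·(1−μ/(γσ²))²)^{1/3}·ε^{1/3} + O(ε)`. -/
theorem equivalent_safe_rate_asymptotics (μ σ γ : ℝ)
    (hμ : 0 < μ) (hσ : 0 < σ) (hγ : 0 < γ) (hγ1 : γ ≠ 1)
    (hm0 : 0 < μ / (γ * σ ^ 2)) (hm1 : μ / (γ * σ ^ 2) ≠ 1)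
    (lam : ℝ → ℝ) (ε₁ C₀ : ℝ) (hε₁ : 0 < ε₁) (hC₀ : 0 < C₀)
    (hlam : ∀ ε ∈ Set.Ioo (0 : ℝ) ε₁,
      0 < lam ε ∧ lam ε < μ ∧
      riccatiSol μ σ γ (lam ε)
          (Real.log (sellBoundary μ σ γ (lam ε) ε / buyBoundary μ σ γ (lam ε)))
        = (μ + lam ε) / (γ * σ ^ 2) ∧
      |lam ε - γ * σ ^ 2 *
          ((3 / (4 * γ)) * (μ / (γ * σ ^ 2)) ^ 2 * (1 - μ / (γ * σ ^ 2)) ^ 2)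
            ^ ((1 : ℝ) / 3) * ε ^ ((1 : ℝ) / 3)| ≤ C₀ * ε)
    (β : ℝ → ℝ)
    (hβ : ∀ ε : ℝ, β ε = (μ ^ 2 - (lam ε) ^ 2) / (2 * γ * σ ^ 2)) :
    ∃ ε₀ > (0 : ℝ), ∃ C > (0 : ℝ), ∀ ε ∈ Set.Ioo (0 : ℝ) (min ε₀ ε₁),
      |β ε - μ ^ 2 / (2 * γ * σ ^ 2)
        + (γ * σ ^ 2 / 2) *
            ((3 / (4 * γ)) * (μ / (γ * σ ^ 2)) ^ 2 * (1 - μ / (γ * σ ^ 2)) ^ 2)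
              ^ ((2 : ℝ) / 3) * ε ^ ((2 : ℝ) / 3)|
        ≤ C * ε ^ ((4 : ℝ) / 3) := by
  have hgs : 0 < γ * σ ^ 2 := by positivity
  set K := (3 / (4 * γ)) * (μ / (γ * σ ^ 2)) ^ 2 * (1 - μ / (γ * σ ^ 2)) ^ 2 with hKdef
  have hK : 0 < K := by
    have h1 : μ / (γ * σ ^ 2) ≠ 0 := ne_of_gt hm0
    have h2 : (1 - μ / (γ * σ ^ 2)) ≠ 0 := sub_ne_zero.mpr (Ne.symm hm1)
    positivity
  set A := γ * σ ^ 2 * K ^ ((1:ℝ)/3) with hAdef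
  have hA : 0 < A := by positivity
  refine ⟨1, one_pos, (2*A*C₀ + C₀^2)/(2*γ*σ^2) + 1, by positivity, ?_⟩
  intro ε hε
  obtain ⟨hε0, hεlt⟩ := hε
  have hε1 : ε < 1 := lt_of_lt_of_le hεlt (min_le_left _ _)
  have hεε₁ : ε < ε₁ := lt_of_lt_of_le hεlt (min_le_right _ _)
  obtain ⟨hlp, hlμ, -, hasym⟩ := hlam ε ⟨hε0, hεε₁⟩
  have hε13 : 0 < ε ^ ((1:ℝ)/3) := Real.rpow_pos_of_pos hε0 _
  have hcube : (γ * σ ^ 2 / 2) * K ^ ((2:ℝ)/3) * ε ^ ((2:ℝ)/3)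
      = (A * ε^((1:ℝ)/3))^2 / (2 * γ * σ ^ 2) := by
    have h1 : K ^ ((2:ℝ)/3) = (K ^ ((1:ℝ)/3))^2 := by
      rw [← Real.rpow_natCast (K ^ ((1:ℝ)/3)) 2, ← Real.rpow_mul hK.le]; norm_num
    have h2 : ε ^ ((2:ℝ)/3) = (ε ^ ((1:ℝ)/3))^2 := by
      rw [← Real.rpow_natCast (ε ^ ((1:ℝ)/3)) 2, ← Real.rpow_mul hε0.le]; norm_num
    rw [h1, h2, hAdef]
    exact aux_cube γ σ (K ^ ((1:ℝ)/3)) (ε ^ ((1:ℝ)/3)) hγ.ne' hσ.ne'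
  have hexpr : β ε - μ ^ 2 / (2 * γ * σ ^ 2) + (γ * σ ^ 2 / 2) * K ^ ((2:ℝ)/3) * ε ^ ((2:ℝ)/3)
      = ((A * ε^((1:ℝ)/3)) - lam ε) * ((A * ε^((1:ℝ)/3)) + lam ε) / (2 * γ * σ ^ 2) := by
    rw [hβ, hcube]
    exact aux_expr γ σ (A * ε ^ ((1:ℝ)/3)) (lam ε) (μ ^ 2) hγ.ne' hσ.ne'
  rw [hexpr, abs_div, abs_mul, abs_of_pos (by positivity : (0:ℝ) < 2*γ*σ^2)]
  have h1 : |A * ε^((1:ℝ)/3) - lam ε| ≤ C₀ * ε := by rw [abs_sub_comm]; exact hasym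
  have habs := abs_le.mp hasym
  have h2 : |A * ε^((1:ℝ)/3) + lam ε| ≤ 2*A*ε^((1:ℝ)/3) + C₀*ε := by
    rw [abs_of_pos (by positivity)]
    linarith [habs.2]
  have hprod : |A * ε^((1:ℝ)/3) - lam ε| * |A * ε^((1:ℝ)/3) + lam ε|
      ≤ (C₀*ε) * (2*A*ε^((1:ℝ)/3) + C₀*ε) :=
    mul_le_mul h1 h2 (abs_nonneg _) (by positivity)
  have h43 : ε * ε^((1:ℝ)/3) = ε^((4:ℝ)/3) := by
    nth_rewrite 1 [← Real.rpow_one ε]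
    rw [← Real.rpow_add hε0]; norm_num
  have hsq : ε^2 ≤ ε^((4:ℝ)/3) := by
    have h : ε^((2:ℕ):ℝ) ≤ ε^((4:ℝ)/3) :=
      Real.rpow_le_rpow_of_exponent_ge hε0 hε1.le (by norm_num)
    rwa [Real.rpow_natCast] at h
  have h43pos : 0 < ε^((4:ℝ)/3) := Real.rpow_pos_of_pos hε0 _
  have hstep : (C₀*ε)*(2*A*ε^((1:ℝ)/3)+C₀*ε) ≤ (2*A*C₀+C₀^2) * ε^((4:ℝ)/3) := by
    have e1 : (C₀*ε)*(2*A*ε^((1:ℝ)/3)+C₀*ε) = 2*A*C₀*(ε*ε^((1:ℝ)/3)) + C₀^2*ε^2 := by ring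
    have e2 : C₀^2*ε^2 ≤ C₀^2*ε^((4:ℝ)/3) := mul_le_mul_of_nonneg_left hsq (sq_nonneg _)
    rw [e1, h43]
    linarith
  calc |A * ε^((1:ℝ)/3) - lam ε| * |A * ε^((1:ℝ)/3) + lam ε| / (2*γ*σ^2)
      ≤ ((2*A*C₀+C₀^2) * ε^((4:ℝ)/3)) / (2*γ*σ^2) := by
        exact (div_le_div_iff_of_pos_right (by positivity)).mpr (hprod.trans hstep)
    _ ≤ ((2*A*C₀ + C₀^2)/(2*γ*σ^2) + 1) * ε^((4:ℝ)/3) := by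
        rw [show ((2*A*C₀+C₀^2) * ε^((4:ℝ)/3)) / (2*γ*σ^2)
          = (2*A*C₀+C₀^2)/(2*γ*σ^2) * ε^((4:ℝ)/3) by ring]
        nlinarith [h43pos]
end

section
/- Let μ, σ > 0, γ > 0 with γ ≠ 1, 0 ≤ λ ≤ μ, and β = (μ² − λ²)/(2γσ²). Let 0 < z₁ < z₂, let v : (z₁, z₂) → ℝ be twice differentiable with v(z) > 0 for all z, and suppose v satisfies (σ²/2)·z²·v''(z) + μ·z·v'(z) − (1−γ)·β·v(z) = 0 on (z₁, z₂). Fix l ∈ (z₁, z₂) and define w(y) = l·e^{y}·v'(l·e^{y}) / ((1−γ)·v(l·e^{y})) for all y with l·e^{y} ∈ (z₁, z₂). Then w satisfies the Riccati ODE with parameters (μ, σ, γ, λ): w'(y) + (1−γ)·w(y)² + (2μ/σ² − 1)·w(y) − (μ² − λ²)/(γσ⁴) = 0, at every such y. -/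
/-- the logarithmic change of variable
`w(y) = l·e^y·v'(l·e^y)/((1−γ)·v(l·e^y))` transforms a positive solution of the
second-order linear HJB ODE `(σ²/2)z²v'' + μzv' − (1−γ)βv = 0` (with
`β = (μ²−λ²)/(2γσ²)`) into a solution of the Riccati ODE
`w' + (1−γ)w² + (2μ/σ² − 1)w − (μ²−λ²)/(γσ⁴) = 0`. -/
theorem hjb_to_riccati (μ σ γ lam β z₁ z₂ l : ℝ)
    (hμ : 0 < μ) (hσ : 0 < σ) (hγ : 0 < γ) (hγ1 : γ ≠ 1)
    (hlam0 : 0 ≤ lam) (hlamμ : lam ≤ μ)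
    (hβ : β = (μ ^ 2 - lam ^ 2) / (2 * γ * σ ^ 2))
    (hz₁ : 0 < z₁) (hz₁₂ : z₁ < z₂)
    (v : ℝ → ℝ)
    (hv : ∀ z ∈ Set.Ioo z₁ z₂, DifferentiableAt ℝ v z)
    (hv' : ∀ z ∈ Set.Ioo z₁ z₂, DifferentiableAt ℝ (deriv v) z)
    (hvpos : ∀ z ∈ Set.Ioo z₁ z₂, 0 < v z)
    (hode : ∀ z ∈ Set.Ioo z₁ z₂,
      (σ ^ 2 / 2) * z ^ 2 * deriv (deriv v) z + μ * z * deriv v z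
        - (1 - γ) * β * v z = 0)
    (hl : l ∈ Set.Ioo z₁ z₂)
    (w : ℝ → ℝ)
    (hw : w = fun y => l * Real.exp y * deriv v (l * Real.exp y) /
      ((1 - γ) * v (l * Real.exp y))) :
    ∀ y : ℝ, l * Real.exp y ∈ Set.Ioo z₁ z₂ →
      deriv w y + (1 - γ) * (w y) ^ 2 + (2 * μ / σ ^ 2 - 1) * (w y)
        - (μ ^ 2 - lam ^ 2) / (γ * σ ^ 4) = 0 := by
  intro y hy
  set z : ℝ := l * Real.exp y with hzdef
  have hzpos : 0 < z := hz₁.trans hy.1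
  have hA : 0 < v z := hvpos z hy
  have h1γ : (1 - γ) ≠ 0 := sub_ne_zero.mpr (Ne.symm hγ1)
  have hden : (1 - γ) * v z ≠ 0 := mul_ne_zero h1γ (ne_of_gt hA)
  have hg : HasDerivAt (fun y => l * Real.exp y) z y := by
    simpa using (Real.hasDerivAt_exp y).const_mul l
  have hB : HasDerivAt v (deriv v z) z := (hv z hy).hasDerivAt
  have hC : HasDerivAt (deriv v) (deriv (deriv v) z) z := (hv' z hy).hasDerivAt
  have hnum : HasDerivAt (fun y => l * Real.exp y * deriv v (l * Real.exp y))
      (z * deriv v z + z * (deriv (deriv v) z * z)) y := by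
    have := hg.mul ((hC.comp y hg))
    refine this.congr_deriv ?_
    rw [hzdef]; simp only [Function.comp_apply]
  have hd : HasDerivAt (fun y => (1 - γ) * v (l * Real.exp y))
      ((1 - γ) * (deriv v z * z)) y := (hB.comp y hg).const_mul (1 - γ)
  have hwd : HasDerivAt w
      (((z * deriv v z + z * (deriv (deriv v) z * z)) * ((1 - γ) * v z)
        - (z * deriv v z) * ((1 - γ) * (deriv v z * z))) / ((1 - γ) * v z) ^ 2) y := by
    rw [hw]; exact hnum.div hd hden
  have hwy : w y = z * deriv v z / ((1 - γ) * v z) := by rw [hw]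
  have hode' := hode z hy
  rw [hwd.deriv, hwy]
  have hσ2 : σ ^ 2 ≠ 0 := pow_ne_zero 2 (ne_of_gt hσ)
  have hγ0 : γ ≠ 0 := ne_of_gt hγ
  have hA0 : v z ≠ 0 := ne_of_gt hA
  subst hβ
  have key : (((z * deriv v z + z * (deriv (deriv v) z * z)) * ((1 - γ) * v z)
      - z * deriv v z * ((1 - γ) * (deriv v z * z))) / ((1 - γ) * v z) ^ 2)
      + (1 - γ) * (z * deriv v z / ((1 - γ) * v z)) ^ 2
      + (2 * μ / σ ^ 2 - 1) * (z * deriv v z / ((1 - γ) * v z))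
      - (μ ^ 2 - lam ^ 2) / (γ * σ ^ 4)
      = (2 / (σ ^ 2 * ((1 - γ) * v z))) * ((σ ^ 2 / 2) * z ^ 2 * deriv (deriv v) z
        + μ * z * deriv v z - (1 - γ) * ((μ ^ 2 - lam ^ 2) / (2 * γ * σ ^ 2)) * v z) := by
    field_simp
    ring
  rw [key, hode', mul_zero]
end
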